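/- Let H' be a finite-dimensional complex Hilbert space and let f be a nonnegative function on unit vectors of H' satisfying |f(φ) − f(ψ)| ≤ 2‖φ − ψ‖₂ for all unit vectors φ, ψ. Let S₀ ⊆ H' be a fixed subspace and φ₀ a fixed unit vector in S₀, and let S = U S₀ with U distributed according to the Haar measure on the unitary group of H'. Then for any δ > 0 and any 0 < ε < 1/2, Pr_S( max over unit vectors φ ∈ S of f(φ) > δ ) ≤ (5/ε)^{2 dim S₀} · Pr_U( f(U φ₀) > δ − ε ). -/

import Mathlib

open Matrix MeasureTheory
open scoped BigOperators ENNReal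

noncomputable section

/-- Matrices over `ℂ` are measurable via the entrywise (pi-type) σ-algebra. -/
instance matrixMeasurableSpace {m n : Type*} : MeasurableSpace (Matrix m n ℂ) :=
  (inferInstance : MeasurableSpace (m → n → ℂ))

/-- The Euclidean (Hilbert-space) norm of a vector. -/
def evnorm {n : Type*} [Fintype n] (v : n → ℂ) : ℝ := Real.sqrt (∑ i, ‖v i‖ ^ 2)

end

noncomputable section Aux

namespace RandomSubspaceAux

open Metric Module

/-! ### Instances for the unitary group -/

variable {n : Type*} [Fintype n] [DecidableEq n]

instance : BorelSpace (Matrix n n ℂ) := Pi.borelSpace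

instance : SecondCountableTopology (Matrix n n ℂ) :=
  (inferInstance : SecondCountableTopology (n → n → ℂ))

instance : BorelSpace (Matrix.unitaryGroup n ℂ) :=
  Subtype.borelSpace (Matrix.unitaryGroup n ℂ : Set (Matrix n n ℂ))

instance : SecondCountableTopology (Matrix.unitaryGroup n ℂ) :=
  (inferInstance : SecondCountableTopology ((Matrix.unitaryGroup n ℂ : Set (Matrix n n ℂ))))

instance : IsTopologicalGroup (Matrix.unitaryGroup n ℂ) where
  continuous_mul := by
    apply continuous_induced_rng.2
    exact ((continuous_subtype_val.comp continuous_fst).matrix_mul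
      (continuous_subtype_val.comp continuous_snd))
  continuous_inv := by
    apply continuous_induced_rng.2
    have : ∀ U : Matrix.unitaryGroup n ℂ, ((U⁻¹ : Matrix.unitaryGroup n ℂ) : Matrix n n ℂ)
        = star (U : Matrix n n ℂ) := fun U => rfl
    simp only [Function.comp_def, this]
    exact continuous_star.comp continuous_subtype_val

instance : CompactSpace (Matrix.unitaryGroup n ℂ) := by
  have hcpt : IsCompact (Matrix.unitaryGroup n ℂ : Set (Matrix n n ℂ)) := by
    have hsub : (Matrix.unitaryGroup n ℂ : Set (Matrix n n ℂ)) ⊆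
        Set.univ.pi (fun _ : n => Set.univ.pi fun _ : n => Metric.closedBall (0:ℂ) 1) := by
      intro U hU i _ j _
      simpa using entry_norm_bound_of_unitary hU i j
    have hK : IsCompact (Set.univ.pi (fun _ : n => Set.univ.pi fun _ : n =>
        Metric.closedBall (0:ℂ) 1)) :=
      isCompact_univ_pi fun _ => isCompact_univ_pi fun _ => isCompact_closedBall _ _
    refine hK.of_isClosed_subset ?_ hsub
    have hset : (Matrix.unitaryGroup n ℂ : Set (Matrix n n ℂ)) =
        {A | star A * A = 1} ∩ {A | A * star A = 1} := by
      ext A; exact Unitary.mem_iff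
    rw [hset]
    have hc : Continuous fun A : Matrix n n ℂ => star A := continuous_star
    exact ((isClosed_eq (hc.matrix_mul continuous_id) continuous_const).inter
      (isClosed_eq (continuous_id.matrix_mul hc) continuous_const))
  exact isCompact_iff_compactSpace.mp hcpt

/-- A left-invariant probability measure on the (compact) unitary group is also
right-invariant. -/
theorem unitary_right_invariant (ν : Measure (Matrix.unitaryGroup n ℂ))
    [IsProbabilityMeasure ν] [ν.IsMulLeftInvariant] : ν.IsMulRightInvariant := by
  have hopen : ν.IsOpenPosMeasure :=
    MeasureTheory.isOpenPosMeasure_of_mulLeftInvariant_of_compact Set.univ isCompact_univ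
      (by simp)
  haveI := hopen
  haveI : ν.IsHaarMeasure := { }
  constructor
  intro g
  set νg := Measure.map (· * g) ν with hνg
  haveI : IsProbabilityMeasure νg :=
    Measure.isProbabilityMeasure_map (measurable_mul_const g).aemeasurable
  haveI : νg.IsMulLeftInvariant := by
    rw [hνg]; infer_instance
  haveI : νg.IsOpenPosMeasure :=
    MeasureTheory.isOpenPosMeasure_of_mulLeftInvariant_of_compact Set.univ isCompact_univ
      (by simp)
  haveI : νg.IsHaarMeasure := { }
  exact Measure.isHaarMeasure_eq_of_isProbabilityMeasure νg ν

/-! ### `evnorm` basics -/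

omit [DecidableEq n] in
theorem evnorm_eq_norm (v : n → ℂ) :
    evnorm v = ‖(WithLp.equiv 2 (n → ℂ)).symm v‖ := by
  rw [EuclideanSpace.norm_eq]
  rfl

omit [DecidableEq n] in
theorem sum_sq_eq_re_dot (v : n → ℂ) :
    ∑ i, ‖v i‖ ^ 2 = (star v ⬝ᵥ v).re := by
  simp only [dotProduct, Pi.star_apply, Complex.re_sum]
  refine Finset.sum_congr rfl fun i _ => ?_
  rw [Complex.star_def, ← Complex.normSq_eq_conj_mul_self, Complex.normSq_eq_norm_sq,
    Complex.ofReal_re]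

theorem evnorm_mulVec (U : Matrix.unitaryGroup n ℂ) (v : n → ℂ) :
    evnorm ((U : Matrix n n ℂ) *ᵥ v) = evnorm v := by
  unfold evnorm
  rw [sum_sq_eq_re_dot, sum_sq_eq_re_dot]
  congr 2
  rw [star_mulVec, dotProduct_mulVec, vecMul_vecMul]
  have : star v ᵥ* ((U : Matrix n n ℂ)ᴴ * (U : Matrix n n ℂ)) = star v ᵥ* 1 := by
    rw [← Matrix.star_eq_conjTranspose, (Matrix.mem_unitaryGroup_iff').mp U.2]
  rw [this, vecMul_one]

/-! ### Transitivity of the unitary group on the unit sphere -/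

theorem exists_unitary_mulVec_eq {φ ψ : n → ℂ} (hφ : evnorm φ = 1) (hψ : evnorm ψ = 1) :
    ∃ V : Matrix.unitaryGroup n ℂ, (V : Matrix n n ℂ) *ᵥ φ = ψ := by
  classical
  set E := EuclideanSpace ℂ n
  set φ' : E := (WithLp.equiv 2 (n → ℂ)).symm φ with hφ'
  set ψ' : E := (WithLp.equiv 2 (n → ℂ)).symm ψ with hψ'
  have hφn : ‖φ'‖ = 1 := by rw [← evnorm_eq_norm]; exact hφ
  have hψn : ‖ψ'‖ = 1 := by rw [← evnorm_eq_norm]; exact hψ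
  have hne : Nonempty n := by
    by_contra h
    rw [not_nonempty_iff] at h
    have : evnorm φ = 0 := by simp [evnorm]
    rw [hφ] at this; norm_num at this
  obtain ⟨i₀⟩ := hne
  have hcard : Module.finrank ℂ E = Fintype.card n := finrank_euclideanSpace
  have horth : ∀ x : E, ‖x‖ = 1 →
      Orthonormal ℂ (({i₀} : Set n).restrict (fun _ : n => x)) := by
    intro x hx
    constructor
    · intro i; exact hx
    · intro i j hij
      exact absurd (Subsingleton.elim i j) hij
  obtain ⟨b, hb⟩ := (horth φ' hφn).exists_orthonormalBasis_extension_of_card_eq hcard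
  obtain ⟨c, hc⟩ := (horth ψ' hψn).exists_orthonormalBasis_extension_of_card_eq hcard
  have hbi : b i₀ = φ' := hb i₀ rfl
  have hci : c i₀ = ψ' := hc i₀ rfl
  set e : OrthonormalBasis n ℂ E := EuclideanSpace.basisFun n ℂ
  set B : Matrix n n ℂ := e.toBasis.toMatrix ⇑b.toBasis with hB
  set C : Matrix n n ℂ := e.toBasis.toMatrix ⇑c.toBasis with hC
  have hBu : B ∈ Matrix.unitaryGroup n ℂ := by
    have := e.toMatrix_orthonormalBasis_mem_unitary b
    simpa [hB] using this
  have hCu : C ∈ Matrix.unitaryGroup n ℂ := by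
    have := e.toMatrix_orthonormalBasis_mem_unitary c
    simpa [hC] using this
  refine ⟨(⟨C, hCu⟩ : Matrix.unitaryGroup n ℂ) * star (⟨B, hBu⟩ : Matrix.unitaryGroup n ℂ), ?_⟩
  have hcoe : ((⟨C, hCu⟩ * star (⟨B, hBu⟩ : Matrix.unitaryGroup n ℂ) :
      Matrix.unitaryGroup n ℂ) : Matrix n n ℂ) = C * Bᴴ := rfl
  rw [hcoe, ← mulVec_mulVec]
  have hBe : ∀ i k, B i k = (b k : E) i := by
    intro i k
    rw [hB, Basis.toMatrix_apply]
    simp [e, EuclideanSpace.basisFun]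
    rfl
  have h1 : Bᴴ *ᵥ φ = Pi.single i₀ 1 := by
    funext k
    have : (Bᴴ *ᵥ φ) k = ∑ i, (starRingEnd ℂ) (B i k) * φ i := by
      simp [mulVec, dotProduct, conjTranspose_apply]
    rw [this]
    have hinner : ∑ i, (starRingEnd ℂ) (B i k) * φ i = inner ℂ (b k) φ' := by
      rw [PiLp.inner_apply]
      refine Finset.sum_congr rfl fun i _ => ?_
      rw [hBe, mul_comm]
      rfl
    rw [hinner, ← OrthonormalBasis.repr_apply_apply, ← hbi, OrthonormalBasis.repr_self]
    simp [EuclideanSpace.single, Pi.single_apply]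
  rw [h1]
  funext i
  have : (C *ᵥ Pi.single i₀ 1) i = C i i₀ := by
    simp [mulVec, dotProduct, Pi.single_apply]
  rw [this]
  have hCe : C i i₀ = (c i₀ : E) i := by
    rw [hC, Basis.toMatrix_apply]
    simp [e, EuclideanSpace.basisFun]
    rfl
  rw [hCe, hci]
  rfl

/-! ### Nets on the unit sphere -/

theorem sep_card_bound {V : Type*} [NormedAddCommGroup V] [NormedSpace ℝ V]
    [FiniteDimensional ℝ V] {r : ℝ} (hr : 0 < r)
    (T : Finset V) (hT : ∀ ψ ∈ T, ‖ψ‖ = 1)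
    (hsep : (T : Set V).Pairwise fun x y => r ≤ dist x y) :
    (T.card : ℝ) ≤ (1 + 2 / r) ^ (finrank ℝ V) := by
  borelize V
  set μ : Measure V := (Module.finBasis ℝ V).addHaar with hμ
  haveI : μ.IsAddHaarMeasure := inferInstance
  have hhalf : 0 < r / 2 := by linarith
  have hdisj : (T : Set V).PairwiseDisjoint fun ψ => ball ψ (r / 2) := by
    intro x hx y hy hxy
    exact ball_disjoint_ball (by linarith [hsep hx hy hxy])
  have hmeas : ∀ ψ ∈ T, MeasurableSet (ball ψ (r / 2)) :=
    fun ψ _ => measurableSet_ball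
  have hsum : μ (⋃ ψ ∈ T, ball ψ (r / 2)) = ∑ ψ ∈ T, μ (ball ψ (r / 2)) :=
    measure_biUnion_finset hdisj hmeas
  have hball : ∀ ψ : V, μ (ball ψ (r / 2)) =
      ENNReal.ofReal ((r / 2) ^ finrank ℝ V) * μ (ball 0 1) :=
    fun ψ => Measure.addHaar_ball_of_pos μ ψ hhalf
  have hsub : (⋃ ψ ∈ T, ball ψ (r / 2)) ⊆ ball (0 : V) (1 + r / 2) := by
    intro y hy
    simp only [Set.mem_iUnion] at hy
    obtain ⟨ψ, hψT, hyb⟩ := hy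
    have h1 : ‖ψ‖ = 1 := hT ψ hψT
    have : dist y 0 ≤ dist y ψ + dist ψ 0 := dist_triangle _ _ _
    rw [mem_ball]
    rw [mem_ball] at hyb
    simp only [dist_zero_right] at *
    linarith [hyb, le_of_eq h1]
  have hbig : μ (ball (0 : V) (1 + r / 2)) =
      ENNReal.ofReal ((1 + r / 2) ^ finrank ℝ V) * μ (ball 0 1) :=
    Measure.addHaar_ball_of_pos μ 0 (by linarith)
  have hchain : (T.card : ℝ≥0∞) * (ENNReal.ofReal ((r / 2) ^ finrank ℝ V) * μ (ball 0 1))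
      ≤ ENNReal.ofReal ((1 + r / 2) ^ finrank ℝ V) * μ (ball 0 1) := by
    calc (T.card : ℝ≥0∞) * (ENNReal.ofReal ((r / 2) ^ finrank ℝ V) * μ (ball 0 1))
        = ∑ ψ ∈ T, μ (ball ψ (r / 2)) := by
          rw [Finset.sum_congr rfl (fun ψ _ => hball ψ), Finset.sum_const, nsmul_eq_mul]
      _ = μ (⋃ ψ ∈ T, ball ψ (r / 2)) := hsum.symm
      _ ≤ μ (ball (0 : V) (1 + r / 2)) := measure_mono hsub
      _ = _ := hbig
  have hfactor : ENNReal.ofReal ((1 + r / 2) ^ finrank ℝ V) =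
      ENNReal.ofReal ((1 + 2 / r) ^ finrank ℝ V) * ENNReal.ofReal ((r / 2) ^ finrank ℝ V) := by
    rw [← ENNReal.ofReal_mul (by positivity), ← mul_pow]
    congr 2
    field_simp
    ring
  rw [hfactor, ← mul_assoc] at hchain
  have hb0 : μ (ball (0:V) 1) ≠ 0 := (measure_ball_pos μ 0 one_pos).ne'
  have hbt : μ (ball (0:V) 1) ≠ ⊤ := measure_ball_lt_top.ne
  have hr0 : ENNReal.ofReal ((r / 2) ^ finrank ℝ V) ≠ 0 := by
    simp only [ne_eq, ENNReal.ofReal_eq_zero, not_le]; positivity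
  have hrt : ENNReal.ofReal ((r / 2) ^ finrank ℝ V) ≠ ⊤ := ENNReal.ofReal_ne_top
  have hfin : (T.card : ℝ≥0∞) ≤ ENNReal.ofReal ((1 + 2 / r) ^ finrank ℝ V) := by
    have h2 : (T.card : ℝ≥0∞) * ENNReal.ofReal ((r / 2) ^ finrank ℝ V)
        ≤ ENNReal.ofReal ((1 + 2 / r) ^ finrank ℝ V) * ENNReal.ofReal ((r / 2) ^ finrank ℝ V) :=
      (ENNReal.mul_le_mul_iff_left hb0 hbt).mp hchain
    exact (ENNReal.mul_le_mul_iff_left hr0 hrt).mp h2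
  have : ((T.card : ℝ≥0∞)).toReal ≤ (ENNReal.ofReal ((1 + 2 / r) ^ finrank ℝ V)).toReal :=
    ENNReal.toReal_mono ENNReal.ofReal_ne_top hfin
  simpa [ENNReal.toReal_ofReal (by positivity : (0:ℝ) ≤ (1 + 2 / r) ^ finrank ℝ V)] using this

theorem exists_net {V : Type*} [NormedAddCommGroup V] [NormedSpace ℝ V]
    [FiniteDimensional ℝ V] {r : ℝ} (hr : 0 < r) :
    ∃ T : Finset V, (∀ ψ ∈ T, ‖ψ‖ = 1) ∧ (T.card : ℝ) ≤ (1 + 2 / r) ^ (finrank ℝ V) ∧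
      ∀ x : V, ‖x‖ = 1 → ∃ ψ ∈ T, ‖x - ψ‖ < r := by
  classical
  set B : ℝ := (1 + 2 / r) ^ (finrank ℝ V) with hB
  set N : ℕ := ⌊B⌋₊ with hN
  set P : ℕ → Prop := fun k => ∃ T : Finset V, (∀ ψ ∈ T, ‖ψ‖ = 1) ∧
      ((T : Set V).Pairwise fun x y => r ≤ dist x y) ∧ T.card = k with hP
  have hbound : ∀ k, P k → k ≤ N := by
    intro k ⟨T, h1, h2, h3⟩
    have := sep_card_bound hr T h1 h2
    rw [h3] at this
    exact Nat.le_floor this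
  have hP0 : P 0 := ⟨∅, by simp, by simp, rfl⟩
  set k0 : ℕ := Nat.findGreatest P N with hk0
  have hPk0 : P k0 := Nat.findGreatest_spec (Nat.zero_le N) hP0
  obtain ⟨T, hT1, hT2, hT3⟩ := hPk0
  refine ⟨T, hT1, ?_, ?_⟩
  · calc (T.card : ℝ) ≤ B := sep_card_bound hr T hT1 hT2
      _ = B := rfl
  · intro x hx
    by_contra hcon
    push_neg at hcon
    have hfar : ∀ ψ ∈ T, r ≤ dist x ψ := by
      intro ψ hψ
      rw [dist_eq_norm]
      exact hcon ψ hψ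
    have hxT : x ∉ T := by
      intro hxT
      have := hfar x hxT
      simp at this
      linarith
    have hP' : P (k0 + 1) := by
      refine ⟨insert x T, ?_, ?_, ?_⟩
      · intro ψ hψ
        rcases Finset.mem_insert.mp hψ with h | h
        · rw [h]; exact hx
        · exact hT1 ψ h
      · rw [Finset.coe_insert]
        haveI : Std.Symm (fun x y : V => r ≤ dist x y) := ⟨fun a b hab => by rwa [dist_comm]⟩
        refine (Set.pairwise_insert_of_symmetric_of_notMem hxT).mpr ⟨hT2, ?_⟩
        · exact fun b hb => hfar b hb
      · rw [Finset.card_insert_of_notMem hxT, hT3]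
    have hle : k0 + 1 ≤ N := hbound _ hP'
    exact Nat.findGreatest_is_greatest (Nat.lt_succ_self k0) hle hP'

/-- A net on the unit sphere (w.r.t. `evnorm`) of a complex subspace of `n → ℂ` with at most
`(1 + 2/r) ^ (2 * dim)` points. -/
theorem exists_evnorm_net (S₀ : Submodule ℂ (n → ℂ)) {r : ℝ} (hr : 0 < r) :
    ∃ T : Finset (n → ℂ), (∀ ψ ∈ T, ψ ∈ S₀ ∧ evnorm ψ = 1) ∧
      (T.card : ℝ) ≤ (1 + 2 / r) ^ (2 * finrank ℂ S₀) ∧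
      ∀ x ∈ S₀, evnorm x = 1 → ∃ ψ ∈ T, evnorm (x - ψ) < r := by
  classical
  set eL : (WithLp 2 (n → ℂ)) ≃ₗ[ℂ] (n → ℂ) := WithLp.linearEquiv 2 ℂ (n → ℂ) with heL
  set Sₑ : Submodule ℂ (EuclideanSpace ℂ n) := S₀.map (eL.symm.toLinearMap : (n → ℂ) →ₗ[ℂ] EuclideanSpace ℂ n) with hSe
  have hrank : finrank ℝ ↥Sₑ = 2 * finrank ℂ S₀ := by
    have h1 : finrank ℂ ↥Sₑ = finrank ℂ ↥S₀ := LinearEquiv.finrank_map_eq _ _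
    have h2 : finrank ℝ ℂ * finrank ℂ ↥Sₑ = finrank ℝ ↥Sₑ :=
      Module.finrank_mul_finrank ℝ ℂ ↥Sₑ
    rw [← h2, h1, Complex.finrank_real_complex]
  obtain ⟨T', hT'1, hT'2, hT'3⟩ := exists_net (V := ↥Sₑ) hr
  set T : Finset (n → ℂ) := T'.image (fun t : ↥Sₑ => eL (t : EuclideanSpace ℂ n)) with hT
  have hmem : ∀ ψ ∈ T, ψ ∈ S₀ ∧ evnorm ψ = 1 := by
    intro ψ hψ
    rw [hT, Finset.mem_image] at hψ
    obtain ⟨t, htT, rfl⟩ := hψ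
    constructor
    · obtain ⟨y, hyS, hy⟩ := Submodule.mem_map.mp t.2
      have : eL ((t : EuclideanSpace ℂ n)) = y := by rw [← hy]; simp
      rw [this]; exact hyS
    · rw [evnorm_eq_norm]
      have : (WithLp.equiv 2 (n → ℂ)).symm (eL (t : EuclideanSpace ℂ n))
          = (t : EuclideanSpace ℂ n) := rfl
      rw [this]
      exact hT'1 t htT
  refine ⟨T, hmem, ?_, ?_⟩
  · calc (T.card : ℝ) ≤ (T'.card : ℝ) := by exact_mod_cast Finset.card_image_le
      _ ≤ (1 + 2 / r) ^ (finrank ℝ ↥Sₑ) := hT'2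
      _ = (1 + 2 / r) ^ (2 * finrank ℂ S₀) := by rw [hrank]
  · intro x hxS hx1
    have hx' : (eL.symm x : EuclideanSpace ℂ n) ∈ Sₑ := Submodule.mem_map_of_mem hxS
    set X : ↥Sₑ := ⟨eL.symm x, hx'⟩ with hX
    have hXn : ‖X‖ = 1 := by
      have h0 : ‖X‖ = ‖(eL.symm x : EuclideanSpace ℂ n)‖ := rfl
      have h1 : ‖(eL.symm x : EuclideanSpace ℂ n)‖ = ‖(WithLp.equiv 2 (n → ℂ)).symm x‖ := rfl
      rw [h0, h1, ← evnorm_eq_norm x]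
      exact hx1
    obtain ⟨t, htT, htd⟩ := hT'3 X hXn
    refine ⟨eL (t : EuclideanSpace ℂ n), Finset.mem_image_of_mem _ htT, ?_⟩
    rw [evnorm_eq_norm]
    have hsub : (WithLp.equiv 2 (n → ℂ)).symm (x - eL (t : EuclideanSpace ℂ n))
        = ((X - t : ↥Sₑ) : EuclideanSpace ℂ n) := rfl
    rw [hsub]
    exact htd

end RandomSubspaceAux

end Aux

/-- Existence of good subspaces / discretization. Let `H'` be a
finite-dimensional complex Hilbert space and `f` a nonnegative function on unit vectors with
`|f(φ) − f(ψ)| ≤ 2‖φ − ψ‖₂`.  Let `S₀ ⊆ H'` be a fixed subspace, `φ₀` a fixed unit vector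
of `S₀`, and `S = U S₀` with `U` Haar-distributed on the unitary group of `H'`.  Then for any
`δ > 0` and `0 < ε < 1/2`,
`Pr_S( max_{unit φ ∈ S} f(φ) > δ ) ≤ (5/ε)^{2 dim S₀} · Pr_U( f(U φ₀) > δ − ε )`. -/
theorem prob_max_over_random_subspace_le
    {n : Type*} [Fintype n] [DecidableEq n]
    (f : (n → ℂ) → ℝ)
    (hf_nonneg : ∀ x : n → ℂ, evnorm x = 1 → 0 ≤ f x)
    (hf_lip : ∀ x y : n → ℂ, evnorm x = 1 → evnorm y = 1 → |f x - f y| ≤ 2 * evnorm (x - y))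
    (S₀ : Submodule ℂ (n → ℂ)) (φ₀ : n → ℂ) (hφ₀S : φ₀ ∈ S₀) (hφ₀ : evnorm φ₀ = 1)
    (ν : Measure (Matrix.unitaryGroup n ℂ))
    [IsProbabilityMeasure ν] [ν.IsMulLeftInvariant]
    (δ : ℝ) (hδ : 0 < δ) (ε : ℝ) (hε : 0 < ε) (hε' : ε < 1/2) :
    ν {U | ∃ x ∈ S₀.map (Matrix.mulVecLin (U : Matrix n n ℂ)), evnorm x = 1 ∧ δ < f x}
      ≤ ENNReal.ofReal ((5/ε) ^ (2 * Module.finrank ℂ S₀)) *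
          ν {U | δ - ε < f ((U : Matrix n n ℂ).mulVec φ₀)} := by
  classical
  open RandomSubspaceAux in
  haveI hRI : ν.IsMulRightInvariant := RandomSubspaceAux.unitary_right_invariant ν
  have hε2 : 0 < ε / 2 := by linarith
  obtain ⟨T, hTmem, hTcard, hTcover⟩ := RandomSubspaceAux.exists_evnorm_net S₀ hε2
  set c := ν {U : Matrix.unitaryGroup n ℂ | δ - ε < f ((U : Matrix n n ℂ).mulVec φ₀)} with hc
  -- event inclusion into a finite union
  have hsubset : {U : Matrix.unitaryGroup n ℂ |
        ∃ x ∈ S₀.map (Matrix.mulVecLin (U : Matrix n n ℂ)), evnorm x = 1 ∧ δ < f x}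
      ⊆ ⋃ ψ ∈ T, {U : Matrix.unitaryGroup n ℂ | δ - ε < f ((U : Matrix n n ℂ) *ᵥ ψ)} := by
    rintro U ⟨x, hx, hx1, hxf⟩
    rw [Submodule.mem_map] at hx
    obtain ⟨y, hyS, hyx⟩ := hx
    have hyx' : (U : Matrix n n ℂ) *ᵥ y = x := hyx
    have hy1 : evnorm y = 1 := by
      rw [← RandomSubspaceAux.evnorm_mulVec U y, hyx']; exact hx1
    obtain ⟨ψ, hψT, hdist⟩ := hTcover y hyS hy1
    have hψ1 : evnorm ψ = 1 := (hTmem ψ hψT).2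
    have hUψ1 : evnorm ((U : Matrix n n ℂ) *ᵥ ψ) = 1 := by
      rw [RandomSubspaceAux.evnorm_mulVec]; exact hψ1
    have hlip := hf_lip x ((U : Matrix n n ℂ) *ᵥ ψ) hx1 hUψ1
    have hdiff : evnorm (x - (U : Matrix n n ℂ) *ᵥ ψ) = evnorm (y - ψ) := by
      rw [← hyx', ← Matrix.mulVec_sub, RandomSubspaceAux.evnorm_mulVec]
    refine Set.mem_biUnion hψT ?_
    have habs : |f x - f ((U : Matrix n n ℂ) *ᵥ ψ)| ≤ 2 * evnorm (y - ψ) := by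
      rw [← hdiff]; exact hlip
    have h2 : f x - f ((U : Matrix n n ℂ) *ᵥ ψ) ≤ 2 * evnorm (y - ψ) :=
      (abs_le.mp habs).2
    have : 2 * evnorm (y - ψ) < ε := by linarith
    show δ - ε < f ((U : Matrix n n ℂ) *ᵥ ψ)
    linarith
  -- each set in the union has measure `c`
  have heach : ∀ ψ ∈ T,
      ν {U : Matrix.unitaryGroup n ℂ | δ - ε < f ((U : Matrix n n ℂ) *ᵥ ψ)} = c := by
    intro ψ hψT
    obtain ⟨V, hV⟩ := RandomSubspaceAux.exists_unitary_mulVec_eq hφ₀ (hTmem ψ hψT).2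
    have hset : {U : Matrix.unitaryGroup n ℂ | δ - ε < f ((U : Matrix n n ℂ) *ᵥ ψ)}
        = (fun U : Matrix.unitaryGroup n ℂ => U * V) ⁻¹'
          {W : Matrix.unitaryGroup n ℂ | δ - ε < f ((W : Matrix n n ℂ) *ᵥ φ₀)} := by
      ext U
      simp only [Set.mem_setOf_eq, Set.mem_preimage]
      have : ((U * V : Matrix.unitaryGroup n ℂ) : Matrix n n ℂ) *ᵥ φ₀
          = (U : Matrix n n ℂ) *ᵥ ψ := by
        have hmul : ((U * V : Matrix.unitaryGroup n ℂ) : Matrix n n ℂ)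
            = (U : Matrix n n ℂ) * (V : Matrix n n ℂ) := rfl
        rw [hmul, ← Matrix.mulVec_mulVec, hV]
      rw [this]
    rw [hset, measure_preimage_mul_right]
  calc ν {U : Matrix.unitaryGroup n ℂ |
        ∃ x ∈ S₀.map (Matrix.mulVecLin (U : Matrix n n ℂ)), evnorm x = 1 ∧ δ < f x}
      ≤ ν (⋃ ψ ∈ T, {U : Matrix.unitaryGroup n ℂ | δ - ε < f ((U : Matrix n n ℂ) *ᵥ ψ)}) :=
        measure_mono hsubset
    _ ≤ ∑ ψ ∈ T, ν {U : Matrix.unitaryGroup n ℂ | δ - ε < f ((U : Matrix n n ℂ) *ᵥ ψ)} :=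
        measure_biUnion_finset_le _ _
    _ = ∑ _ψ ∈ T, c := Finset.sum_congr rfl heach
    _ = (T.card : ℝ≥0∞) * c := by rw [Finset.sum_const, nsmul_eq_mul]
    _ ≤ ENNReal.ofReal ((5/ε) ^ (2 * Module.finrank ℂ S₀)) * c := by
        apply mul_le_mul_left
        have hb : (T.card : ℝ) ≤ (5/ε) ^ (2 * Module.finrank ℂ S₀) := by
          refine hTcard.trans ?_
          have h1 : (1 : ℝ) + 2 / (ε / 2) = 1 + 4 / ε := by ring
          rw [h1]
          apply pow_le_pow_left₀ (by positivity)
          have : (1 : ℝ) ≤ 1 / ε := by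
            rw [le_div_iff₀ hε]; linarith
          have h4 : 4 / ε + 1 / ε = 5 / ε := by ring
          linarith [this, h4]
        calc (T.card : ℝ≥0∞) = ENNReal.ofReal (T.card : ℝ) := by
              rw [ENNReal.ofReal_natCast]
          _ ≤ ENNReal.ofReal ((5/ε) ^ (2 * Module.finrank ℂ S₀)) :=
              ENNReal.ofReal_le_ofReal hb
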